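/- The fundamental theorem (soundness) for subStraTT holds: if ⟦Γ⟧ and σ ∈ ⟦Γ⟧ (σ is a semantically valid simultaneous substitution for Γ), and Γ ⊢ a :^k A, then ⟦A{σ}⟧_k holds and a{σ} ∈ ⟦A{σ}⟧_k. -/

import Mathlib

/-! subStraTT without global definitions, in de Bruijn representation:
a single universe ⋆ with type-in-type, stratified dependent function types
`Πx:^j A. B`, abstractions, applications, the empty type and its eliminator.
Levels are natural numbers. -/

inductive Tm : Type
  | star
  | var (x : ℕ)
  | pi (j : ℕ) (A B : Tm)
  | lam (b : Tm)
  | app (b a : Tm)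
  | bot
  | absurd (b : Tm)
  deriving DecidableEq

namespace Tm

/-- Shift free de Bruijn indices `≥ c` up by `d`. -/
def shift (d c : ℕ) : Tm → Tm
  | star => star
  | var x => if x < c then var x else var (x + d)
  | pi j A B => pi j (shift d c A) (shift d (c + 1) B)
  | lam b => lam (shift d (c + 1) b)
  | app b a => app (shift d c b) (shift d c a)
  | bot => bot
  | absurd b => absurd (shift d c b)

/-- Substitute `u` for de Bruijn index `k` (decrementing greater indices). -/
def subst (k : ℕ) (u : Tm) : Tm → Tm
  | star => star
  | var x => if x < k then var x else if x = k then shift k 0 u else var (x - 1)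
  | pi j A B => pi j (subst k u A) (subst (k + 1) u B)
  | lam b => lam (subst (k + 1) u b)
  | app b a => app (subst k u b) (subst k u a)
  | bot => bot
  | absurd b => absurd (subst k u b)

end Tm

/-- Parallel reduction `a ⇒ b`: all visible β-redexes may be reduced
simultaneously in one step. -/
inductive Par : Tm → Tm → Prop
  | star : Par .star .star
  | var (x) : Par (.var x) (.var x)
  | bot : Par .bot .bot
  | pi {j A A' B B'} : Par A A' → Par B B' → Par (.pi j A B) (.pi j A' B')
  | lam {b b'} : Par b b' → Par (.lam b) (.lam b')
  | app {b b' a a'} : Par b b' → Par a a' → Par (.app b a) (.app b' a')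
  | beta {b b' a a'} : Par b b' → Par a a' →
      Par (.app (.lam b) a) (Tm.subst 0 a' b')
  | absurd {b b'} : Par b b' → Par (.absurd b) (.absurd b')

/-- `a ⇒* b`: reflexive–transitive closure of parallel reduction. -/
def Pars : Tm → Tm → Prop := Relation.ReflTransGen Par

/-- Joinability `a ⇔ b`: `a` and `b` parallel-reduce to a common term. -/
def Conv (a b : Tm) : Prop := ∃ c, Pars a c ∧ Pars b c

/-- Untyped definitional equality `a ≡ b`: the least reflexive, symmetric,
transitive congruence containing β-equivalence. -/
inductive DEq : Tm → Tm → Prop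
  | refl (a) : DEq a a
  | sym : DEq a b → DEq b a
  | trans : DEq a b → DEq b c → DEq a c
  | beta (b a) : DEq (.app (.lam b) a) (Tm.subst 0 a b)
  | pi {j A A' B B'} : DEq A A' → DEq B B' → DEq (.pi j A B) (.pi j A' B')
  | lam {b b'} : DEq b b' → DEq (.lam b) (.lam b')
  | app {b b' a a'} : DEq b b' → DEq a a' → DEq (.app b a) (.app b' a')
  | absurd {b b'} : DEq b b' → DEq (.absurd b) (.absurd b')

/-! The logical relation, stratified by well-founded induction on levels:
an inductive predicate `⟦A⟧ₖ` on closed types (`U`), parametrized by the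
membership relation at strictly lower levels, together with a membership
relation `a ∈ ⟦A⟧ₖ` (`elU`) defined by recursion on the derivation of `⟦A⟧ₖ`;
the knot is tied by well-founded recursion on the level `k` (`el`). -/

/-- Inductive predicate on closed types at level `k`, with rules for `⋆`, `⊥`,
stratified dependent function types (domain at a strictly lower level `j < k`,
codomain interpreted at all members of the domain), and closure under parallel
reduction. `el` is the membership relation at strictly lower levels. -/
inductive U (el : ℕ → Tm → Tm → Prop) : ℕ → Tm → Type
  | star {k} : U el k .star
  | bot {k} : U el k .bot
  | pi {k j A B} : j < k → U el j A →
      (∀ y, el j A y → U el k (Tm.subst 0 y B)) → U el k (.pi j A B)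
  | red {k A B} : Par A B → U el k B → U el k A

/-- Membership `a ∈ ⟦A⟧ₖ`, by recursion on the derivation of `⟦A⟧ₖ`:
`A ∈ ⟦⋆⟧ₖ` iff `⟦A⟧ₖ`; `a ∈ ⟦⊥⟧ₖ` is false; `f ∈ ⟦Πx:^j A. B⟧ₖ` iff for all
`y ∈ ⟦A⟧ⱼ`, `f y ∈ ⟦B{y/x}⟧ₖ`; membership is preserved along reduction. -/
def elU {el : ℕ → Tm → Tm → Prop} {k : ℕ} : {A : Tm} → U el k A → Tm → Prop
  | _, .star, a => Nonempty (U el k a)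
  | _, .bot, _ => False
  | _, .pi _ _ hB, f => ∀ y hy, elU (hB y hy) (Tm.app f y)
  | _, .red _ h, a => elU h a

/-- The membership relation `a ∈ ⟦A⟧ₖ`, tying the knot by well-founded
recursion on the level `k`. -/
def el (k : ℕ) (A a : Tm) : Prop :=
  ∃ h : U (fun j B b => if h' : j < k then el j B b else False) k A, elU h a
termination_by k
decreasing_by all_goals exact h'

/-- Membership at strictly lower levels than `k`. -/
def lowEl (k : ℕ) : ℕ → Tm → Tm → Prop :=
  fun j B b => if h' : j < k then el j B b else False

/-- The type interpretation `⟦A⟧ₖ` is defined (inhabited). -/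
def interpTy (k : ℕ) (A : Tm) : Prop :=
  Nonempty (U (lowEl k) k A)

/-- A context entry `x :^k A` (level, type); index 0 is the most recent. -/
abbrev Ctx := List (ℕ × Tm)

mutual
  /-- Well-formed contexts. -/
  inductive CtxWf : Ctx → Prop
    | nil : CtxWf []
    | cons {Γ k A} : CtxWf Γ → Typing Γ A k .star → CtxWf ((k, A) :: Γ)

  /-- Level-annotated typing `Γ ⊢ a :^k A` of subStraTT without global
  definitions: type-in-type, stratified dependent functions (domain at a
  strictly lower level, applications at the domain level), the empty type,
  variable subsumption, and conversion. -/
  inductive Typing : Ctx → Tm → ℕ → Tm → Prop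
    | star {Γ k} : CtxWf Γ → Typing Γ .star k .star
    | var {Γ x j k A} : CtxWf Γ → Γ[x]? = some (j, A) → j ≤ k →
        Typing Γ (.var x) k (Tm.shift (x + 1) 0 A)
    | pi {Γ j k A B} : j < k → Typing Γ A j .star →
        Typing ((j, A) :: Γ) B k .star → Typing Γ (.pi j A B) k .star
    | lam {Γ j k A B b} : j < k → Typing Γ A j .star →
        Typing ((j, A) :: Γ) b k B → Typing Γ (.lam b) k (.pi j A B)
    | app {Γ j k A B b a} : Typing Γ b k (.pi j A B) → Typing Γ a j A →
        Typing Γ (.app b a) k (Tm.subst 0 a B)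
    | bot {Γ k} : CtxWf Γ → Typing Γ .bot k .star
    | absurd {Γ k b A} : Typing Γ b k .bot → Typing Γ A k .star →
        Typing Γ (.absurd b) k A
    | conv {Γ k a A B} : Typing Γ a k A → DEq A B → Typing Γ B k .star →
        Typing Γ a k B
end

/-- The tail of a simultaneous substitution. -/
def tl (σ : ℕ → Tm) : ℕ → Tm := fun n => σ (n + 1)

/-- Lifting a simultaneous substitution under a binder. -/
def up (σ : ℕ → Tm) : ℕ → Tm
  | 0 => .var 0
  | n + 1 => Tm.shift 1 0 (σ n)

/-- Applying a simultaneous substitution `a{σ}`. -/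
def applySubst (σ : ℕ → Tm) : Tm → Tm
  | .star => .star
  | .var x => σ x
  | .pi j A B => .pi j (applySubst σ A) (applySubst (up σ) B)
  | .lam b => .lam (applySubst (up σ) b)
  | .app b a => .app (applySubst σ b) (applySubst σ a)
  | .bot => .bot
  | .absurd b => .absurd (applySubst σ b)

/-- `σ ∈ ⟦Γ⟧`: the substitution `σ` is semantically valid for `Γ`:
`σ ∈ ⟦∅⟧` always, and `σ ∈ ⟦Γ, x :^k A⟧` iff (the tail of) `σ ∈ ⟦Γ⟧` and
`σ[x] ∈ ⟦A{σ}⟧ₖ`. -/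
def substInterp : Ctx → (ℕ → Tm) → Prop
  | [], _ => True
  | (k, A) :: Γ, σ => substInterp Γ (tl σ) ∧ el k (applySubst (tl σ) A) (σ 0)

/-- `⟦Γ⟧`: semantic well-formedness of a context: `⟦∅⟧` holds, and
`⟦Γ, x :^k A⟧` holds iff `⟦Γ⟧` holds and `⟦A{σ}⟧ₖ` holds for all `σ ∈ ⟦Γ⟧`. -/
def ctxInterp : Ctx → Prop
  | [] => True
  | (k, A) :: Γ => ctxInterp Γ ∧ ∀ σ, substInterp Γ σ → interpTy k (applySubst σ A)

namespace Tm

theorem shift_zero : ∀ (t : Tm) (c : ℕ), shift 0 c t = t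
  | star, _ => rfl
  | var x, c => by simp [shift]
  | pi j A B, c => by simp [shift, shift_zero A, shift_zero B]
  | lam b, c => by simp [shift, shift_zero b]
  | app b a, c => by simp [shift, shift_zero b, shift_zero a]
  | bot, _ => rfl
  | absurd b, c => by simp [shift, shift_zero b]

/-- Combine two shifts. -/
theorem shift_shift : ∀ (t : Tm) {d d' c c' : ℕ}, c ≤ c' → c' ≤ c + d →
    shift d' c' (shift d c t) = shift (d + d') c t
  | star, _, _, _, _, _, _ => rfl
  | bot, _, _, _, _, _, _ => rfl
  | var x, d, d', c, c', h1, h2 => by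
      simp only [shift]; split <;> simp only [shift] <;> split <;>
        simp only [var.injEq] <;> omega
  | pi j A B, d, d', c, c', h1, h2 => by
      simp only [shift, shift_shift A h1 h2,
        shift_shift B (by omega : c + 1 ≤ c' + 1) (by omega : c' + 1 ≤ c + 1 + d)]
  | lam b, d, d', c, c', h1, h2 => by
      simp only [shift, shift_shift b (by omega : c + 1 ≤ c' + 1) (by omega : c' + 1 ≤ c + 1 + d)]
  | app b a, d, d', c, c', h1, h2 => by
      simp only [shift, shift_shift b h1 h2, shift_shift a h1 h2]
  | absurd b, d, d', c, c', h1, h2 => by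
      simp only [shift, shift_shift b h1 h2]

/-- Substituting into a fresh shifted variable region cancels one shift. -/
theorem subst_shift_cancel : ∀ (t : Tm) {d c n : ℕ} (u : Tm), c ≤ n → n < c + d →
    subst n u (shift d c t) = shift (d - 1) c t
  | star, _, _, _, _, _, _ => rfl
  | bot, _, _, _, _, _, _ => rfl
  | var x, d, c, n, u, h1, h2 => by
      simp only [shift, subst]; split <;> simp only [subst] <;> split <;>
        try split
      all_goals first | (exfalso; omega) | (simp only [var.injEq] <;> omega)
  | pi j A B, d, c, n, u, h1, h2 => by
      simp only [shift, subst, subst_shift_cancel A u h1 h2,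
        subst_shift_cancel B u (by omega : c + 1 ≤ n + 1) (by omega : n + 1 < c + 1 + d)]
  | lam b, d, c, n, u, h1, h2 => by
      simp only [shift, subst,
        subst_shift_cancel b u (by omega : c + 1 ≤ n + 1) (by omega : n + 1 < c + 1 + d)]
  | app b a, d, c, n, u, h1, h2 => by
      simp only [shift, subst, subst_shift_cancel b u h1 h2, subst_shift_cancel a u h1 h2]
  | absurd b, d, c, n, u, h1, h2 => by
      simp only [shift, subst, subst_shift_cancel b u h1 h2]

end Tm
namespace Tm

/-- Swap two shifts at different cutoffs. -/
theorem shift_shift_swap : ∀ (t : Tm) {d1 d2 c1 c2 : ℕ}, c2 ≤ c1 →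
    shift d1 (c1 + d2) (shift d2 c2 t) = shift d2 c2 (shift d1 c1 t)
  | star, _, _, _, _, _ => rfl
  | bot, _, _, _, _, _ => rfl
  | var x, d1, d2, c1, c2, h => by
      iterate 5 (all_goals (try simp only [shift, subst]); all_goals (repeat' split))
      all_goals first | (exfalso; omega) | (simp only [var.injEq] <;> omega)
  | pi j A B, d1, d2, c1, c2, h => by
      have hB := shift_shift_swap B (d1 := d1) (d2 := d2) (c1 := c1 + 1) (c2 := c2 + 1)
        (by omega : c2 + 1 ≤ c1 + 1)
      simp only [shift, shift_shift_swap A h]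
      rw [show c1 + d2 + 1 = c1 + 1 + d2 by omega, hB]
  | lam b, d1, d2, c1, c2, h => by
      have hb := shift_shift_swap b (d1 := d1) (d2 := d2) (c1 := c1 + 1) (c2 := c2 + 1)
        (by omega : c2 + 1 ≤ c1 + 1)
      simp only [shift]
      rw [show c1 + d2 + 1 = c1 + 1 + d2 by omega, hb]
  | app b a, d1, d2, c1, c2, h => by
      simp only [shift, shift_shift_swap b h, shift_shift_swap a h]
  | absurd b, d1, d2, c1, c2, h => by
      simp only [shift, shift_shift_swap b h]

theorem shift_shift_low (u : Tm) {d c n : ℕ} (h : n ≤ c) :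
    shift d c (shift n 0 u) = shift n 0 (shift d (c - n) u) := by
  have := shift_shift_swap u (d1 := d) (d2 := n) (c1 := c - n) (c2 := 0) (Nat.zero_le _)
  rwa [Nat.sub_add_cancel h] at this

/-- Shift commutes with substitution (cutoff above the subst index). -/
theorem shift_subst : ∀ (t : Tm) {d c n : ℕ} (u : Tm), n ≤ c →
    shift d c (subst n u t) = subst n (shift d (c - n) u) (shift d (c + 1) t)
  | star, _, _, _, _, _ => rfl
  | bot, _, _, _, _, _ => rfl
  | var x, d, c, n, u, h => by
      iterate 5 (all_goals (try simp only [shift, subst]); all_goals (repeat' split))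
      all_goals first
        | (exfalso; omega)
        | (simp only [var.injEq] <;> omega)
        | (exact shift_shift_low u h)
        | (exact (shift_shift_low u h).symm)
  | pi j A B, d, c, n, u, h => by
      have hB := shift_subst B (d := d) (c := c + 1) (n := n + 1) u (by omega)
      simp only [shift, subst, shift_subst A u h]
      rw [hB, show c + 1 - (n + 1) = c - n by omega]
  | lam b, d, c, n, u, h => by
      have hb := shift_subst b (d := d) (c := c + 1) (n := n + 1) u (by omega)
      simp only [shift, subst]
      rw [hb, show c + 1 - (n + 1) = c - n by omega]
  | app b a, d, c, n, u, h => by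
      simp only [shift, subst, shift_subst b u h, shift_subst a u h]
  | absurd b, d, c, n, u, h => by
      simp only [shift, subst, shift_subst b u h]

/-- Substitution above a shift passes under it. -/
theorem subst_shift : ∀ (t : Tm) {n c k' : ℕ} (u : Tm), c ≤ k' →
    subst (k' + n) u (shift n c t) = shift n c (subst k' u t)
  | star, _, _, _, _, _ => rfl
  | bot, _, _, _, _, _ => rfl
  | var x, n, c, k', u, h => by
      iterate 5 (all_goals (try simp only [shift, subst]); all_goals (repeat' split))
      all_goals first
        | (exfalso; omega)
        | (simp only [var.injEq] <;> omega)
        | (exact (shift_shift u (Nat.zero_le c) (by omega)).symm)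
        | (exact shift_shift u (Nat.zero_le c) (by omega))
  | pi j A B, n, c, k', u, h => by
      have hB := subst_shift B (n := n) (c := c + 1) (k' := k' + 1) u (by omega)
      simp only [shift, subst, subst_shift A u h]
      rw [show k' + n + 1 = k' + 1 + n by omega, hB]
  | lam b, n, c, k', u, h => by
      have hb := subst_shift b (n := n) (c := c + 1) (k' := k' + 1) u (by omega)
      simp only [shift, subst]
      rw [show k' + n + 1 = k' + 1 + n by omega, hb]
  | app b a, n, c, k', u, h => by
      simp only [shift, subst, subst_shift b u h, subst_shift a u h]
  | absurd b, n, c, k', u, h => by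
      simp only [shift, subst, subst_shift b u h]

/-- The substitution lemma. -/
theorem subst_subst : ∀ (t : Tm) {n k : ℕ} (u v : Tm), n ≤ k →
    subst k u (subst n v t) = subst n (subst (k - n) u v) (subst (k + 1) u t)
  | star, _, _, _, _, _ => rfl
  | bot, _, _, _, _, _ => rfl
  | var x, n, k, u, v, h => by
      have key : subst k u (shift n 0 v) = shift n 0 (subst (k - n) u v) := by
        have h2 := subst_shift v (n := n) (c := 0) (k' := k - n) u (Nat.zero_le _)
        rwa [Nat.sub_add_cancel h] at h2
      iterate 5 (all_goals (try simp only [shift, subst]); all_goals (repeat' split))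
      all_goals first
        | (exfalso; omega)
        | (simp only [var.injEq] <;> omega)
        | (exact subst_shift_cancel u _ (Nat.zero_le n) (by omega))
        | (exact (subst_shift_cancel u _ (Nat.zero_le n) (by omega)).symm)
        | (exact key)
        | (exact key.symm)
        | (exact (by
            have h3 := subst_shift_cancel u (subst (k - n) u v) (Nat.zero_le n)
              (by omega : n < 0 + (k + 1))
            simpa using h3.symm))
  | pi j A B, n, k, u, v, h => by
      have hB := subst_subst B (n := n + 1) (k := k + 1) u v (by omega)
      simp only [subst, subst_subst A u v h]
      rw [hB, show k + 1 - (n + 1) = k - n by omega]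
  | lam b, n, k, u, v, h => by
      have hb := subst_subst b (n := n + 1) (k := k + 1) u v (by omega)
      simp only [subst]
      rw [hb, show k + 1 - (n + 1) = k - n by omega]
  | app b a, n, k, u, v, h => by
      simp only [subst, subst_subst b u v h, subst_subst a u v h]
  | absurd b, n, k, u, v, h => by
      simp only [subst, subst_subst b u v h]

end Tm
/-! ### Parallel reduction: basic properties and confluence -/

theorem parRfl : ∀ a, Par a a
  | .star => .star
  | .var x => .var x
  | .pi _ A B => .pi (parRfl A) (parRfl B)
  | .lam b => .lam (parRfl b)
  | .app b a => .app (parRfl b) (parRfl a)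
  | .bot => .bot
  | .absurd b => .absurd (parRfl b)

theorem Par.shift {a b : Tm} (h : Par a b) : ∀ d c, Par (Tm.shift d c a) (Tm.shift d c b) := by
  induction h with
  | star => exact fun d c => parRfl _
  | var x => exact fun d c => parRfl _
  | bot => exact fun d c => parRfl _
  | pi _ _ ihA ihB => exact fun d c => .pi (ihA d c) (ihB d (c + 1))
  | lam _ ih => exact fun d c => .lam (ih d (c + 1))
  | app _ _ ihb iha => exact fun d c => .app (ihb d c) (iha d c)
  | absurd _ ih => exact fun d c => .absurd (ih d c)
  | @beta b b' a a' _ _ ihb iha =>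
      intro d c
      have : Tm.shift d c (Tm.subst 0 a' b')
          = Tm.subst 0 (Tm.shift d c a') (Tm.shift d (c + 1) b') := by
        simpa using Tm.shift_subst b' (d := d) (c := c) (n := 0) a' (Nat.zero_le _)
      rw [this]
      exact .beta (ihb d (c + 1)) (iha d c)

theorem Par.subst {a a' : Tm} (h : Par a a') :
    ∀ (k : ℕ) {b b' : Tm}, Par b b' → Par (Tm.subst k b a) (Tm.subst k b' a') := by
  induction h with
  | star => exact fun k _ _ _ => .star
  | bot => exact fun k _ _ _ => .bot
  | var x =>
      intro k b b' hb
      simp only [Tm.subst]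
      split
      · exact parRfl _
      · split
        · exact hb.shift k 0
        · exact parRfl _
  | pi _ _ ihA ihB => exact fun k _ _ hb => .pi (ihA k hb) (ihB (k + 1) hb)
  | lam _ ih => exact fun k _ _ hb => .lam (ih (k + 1) hb)
  | app _ _ ihb iha => exact fun k _ _ hb => .app (ihb k hb) (iha k hb)
  | absurd _ ih => exact fun k _ _ hb => .absurd (ih k hb)
  | @beta t t' s s' _ _ iht ihs =>
      intro k b b' hb
      have : Tm.subst k b' (Tm.subst 0 s' t')
          = Tm.subst 0 (Tm.subst k b' s') (Tm.subst (k + 1) b' t') := by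
        simpa using Tm.subst_subst t' (n := 0) (k := k) b' s' (Nat.zero_le _)
      rw [this]
      exact .beta (iht (k + 1) hb) (ihs k hb)

/-- Complete development. -/
def cdev : Tm → Tm
  | .star => .star
  | .var x => .var x
  | .pi j A B => .pi j (cdev A) (cdev B)
  | .lam b => .lam (cdev b)
  | .app (.lam b) a => Tm.subst 0 (cdev a) (cdev b)
  | .app b a => .app (cdev b) (cdev a)
  | .bot => .bot
  | .absurd b => .absurd (cdev b)

theorem Par.lam_inv {b c : Tm} (h : Par (.lam b) c) : ∃ b', c = .lam b' ∧ Par b b' := by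
  cases h with
  | lam hb => exact ⟨_, rfl, hb⟩

theorem Par.triangle : ∀ {a b : Tm}, Par a b → Par b (cdev a) := by
  intro a b h
  induction h with
  | star => exact .star
  | var x => exact .var x
  | bot => exact .bot
  | pi _ _ ihA ihB => exact .pi ihA ihB
  | lam _ ih => exact .lam ih
  | absurd _ ih => exact .absurd ih
  | @beta t t' s s' _ _ iht ihs =>
      simp only [cdev]
      exact Par.subst iht 0 ihs
  | @app f f' s s' hf hs ihf ihs =>
      cases f with
      | lam t =>
          simp only [cdev]
          obtain ⟨t', rfl, _⟩ := Par.lam_inv hf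
          obtain ⟨t'', he, ht''⟩ := Par.lam_inv ihf
          cases he
          exact .beta ht'' ihs
      | star => exact .app ihf ihs
      | var x => exact .app ihf ihs
      | pi j A B => exact .app ihf ihs
      | app g u => exact .app ihf ihs
      | bot => exact .app ihf ihs
      | absurd u => exact .app ihf ihs

theorem par_diamond {a b c : Tm} (h1 : Par a b) (h2 : Par a c) :
    ∃ d, Par b d ∧ Par c d :=
  ⟨cdev a, h1.triangle, h2.triangle⟩

theorem pars_strip {a b c : Tm} (h1 : Par a b) (h2 : Pars a c) :
    ∃ d, Pars b d ∧ Par c d := by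
  induction h2 with
  | refl => exact ⟨b, Relation.ReflTransGen.refl, h1⟩
  | tail _ hstep ih =>
      obtain ⟨d, hbd, hcd⟩ := ih
      obtain ⟨e, hde, hce⟩ := par_diamond hcd hstep
      exact ⟨e, hbd.tail hde, hce⟩

theorem pars_confluence {a b c : Tm} (h1 : Pars a b) (h2 : Pars a c) :
    ∃ d, Pars b d ∧ Pars c d := by
  induction h1 with
  | refl => exact ⟨c, h2, Relation.ReflTransGen.refl⟩
  | tail _ hstep ih =>
      obtain ⟨d, hbd, hcd⟩ := ih
      obtain ⟨e, hde, hce⟩ := pars_strip hstep hbd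
      exact ⟨e, hde, hcd.tail hce⟩

theorem conv_refl (a : Tm) : Conv a a := ⟨a, .refl, .refl⟩

theorem conv_sym {a b : Tm} (h : Conv a b) : Conv b a := ⟨h.choose, h.choose_spec.2, h.choose_spec.1⟩

theorem conv_trans {a b c : Tm} (h1 : Conv a b) (h2 : Conv b c) : Conv a c := by
  obtain ⟨d, had, hbd⟩ := h1
  obtain ⟨e, hbe, hce⟩ := h2
  obtain ⟨f, hdf, hef⟩ := pars_confluence hbd hbe
  exact ⟨f, had.trans hdf, hce.trans hef⟩

theorem conv_par_left {a b c : Tm} (p : Par a b) (h : Conv a c) : Conv b c := by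
  obtain ⟨e, hae, hce⟩ := h
  obtain ⟨f, hbf, hef⟩ := pars_strip p hae
  exact ⟨f, hbf, hce.tail hef⟩

theorem conv_par_right {a b c : Tm} (p : Par b c) (h : Conv a b) : Conv a c :=
  conv_sym (conv_par_left p (conv_sym h))

theorem conv_of_par {a b : Tm} (p : Par a b) : Conv a b :=
  ⟨b, Relation.ReflTransGen.single p, .refl⟩

theorem conv_of_pars {a b : Tm} (p : Pars a b) : Conv a b := ⟨b, p, .refl⟩

/-! Reducts of constructors. -/

theorem pars_star {c : Tm} (h : Pars .star c) : c = .star := by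
  induction h with
  | refl => rfl
  | tail _ hstep ih => subst ih; cases hstep; rfl

theorem pars_bot {c : Tm} (h : Pars .bot c) : c = .bot := by
  induction h with
  | refl => rfl
  | tail _ hstep ih => subst ih; cases hstep; rfl

theorem pars_pi {j : ℕ} {A B c : Tm} (h : Pars (.pi j A B) c) :
    ∃ A' B', c = .pi j A' B' ∧ Pars A A' ∧ Pars B B' := by
  induction h with
  | refl => exact ⟨A, B, rfl, .refl, .refl⟩
  | tail _ hstep ih =>
      obtain ⟨A', B', rfl, hA, hB⟩ := ih
      cases hstep with
      | pi hA' hB' => exact ⟨_, _, rfl, hA.tail hA', hB.tail hB'⟩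

theorem conv_star_bot (h : Conv .star .bot) : False := by
  obtain ⟨c, h1, h2⟩ := h
  rw [pars_star h1] at *; exact Tm.noConfusion (pars_bot h2)

theorem conv_star_pi {j : ℕ} {A B : Tm} (h : Conv .star (.pi j A B)) : False := by
  obtain ⟨c, h1, h2⟩ := h
  obtain ⟨A', B', he, -, -⟩ := pars_pi h2
  rw [pars_star h1] at he; exact Tm.noConfusion he

theorem conv_bot_pi {j : ℕ} {A B : Tm} (h : Conv .bot (.pi j A B)) : False := by
  obtain ⟨c, h1, h2⟩ := h
  obtain ⟨A', B', he, -, -⟩ := pars_pi h2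
  rw [pars_bot h1] at he; exact Tm.noConfusion he

theorem conv_pi_inv {j j' : ℕ} {A B A' B' : Tm} (h : Conv (.pi j A B) (.pi j' A' B')) :
    j = j' ∧ Conv A A' ∧ Conv B B' := by
  obtain ⟨c, h1, h2⟩ := h
  obtain ⟨A1, B1, he1, hA1, hB1⟩ := pars_pi h1
  obtain ⟨A2, B2, he2, hA2, hB2⟩ := pars_pi h2
  rw [he1] at he2
  injection he2 with e1 e2 e3
  subst e1; subst e2; subst e3
  exact ⟨rfl, ⟨_, hA1, hA2⟩, ⟨_, hB1, hB2⟩⟩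

/-! Congruence of `Pars` and `Conv`. -/

theorem pars_lift (f : Tm → Tm) (hf : ∀ x y, Par x y → Par (f x) (f y)) {a b : Tm}
    (h : Pars a b) : Pars (f a) (f b) := by
  induction h with
  | refl => exact .refl
  | tail _ hstep ih => exact ih.tail (hf _ _ hstep)

theorem pars_pi_cong {j : ℕ} {A A' B B' : Tm} (hA : Pars A A') (hB : Pars B B') :
    Pars (.pi j A B) (.pi j A' B') := by
  have h1 := pars_lift (fun X => .pi j X B) (fun x y p => .pi p (parRfl B)) hA
  have h2 := pars_lift (fun X => .pi j A' X) (fun x y p => .pi (parRfl A') p) hB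
  exact h1.trans h2

theorem pars_app_cong {b b' a a' : Tm} (hb : Pars b b') (ha : Pars a a') :
    Pars (.app b a) (.app b' a') := by
  have h1 := pars_lift (fun X => .app X a) (fun x y p => .app p (parRfl a)) hb
  have h2 := pars_lift (fun X => .app b' X) (fun x y p => .app (parRfl b') p) ha
  exact h1.trans h2

theorem pars_lam_cong {b b' : Tm} (hb : Pars b b') : Pars (.lam b) (.lam b') :=
  pars_lift (fun X => .lam X) (fun x y p => .lam p) hb

theorem pars_absurd_cong {b b' : Tm} (hb : Pars b b') : Pars (.absurd b) (.absurd b') :=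
  pars_lift (fun X => .absurd X) (fun x y p => .absurd p) hb

theorem pars_subst_right {B B' : Tm} (y : Tm) (h : Pars B B') :
    Pars (Tm.subst 0 y B) (Tm.subst 0 y B') :=
  pars_lift (fun X => Tm.subst 0 y X) (fun x z p => Par.subst p 0 (parRfl y)) h

theorem conv_pi_cong {j : ℕ} {A A' B B' : Tm} (hA : Conv A A') (hB : Conv B B') :
    Conv (.pi j A B) (.pi j A' B') := by
  obtain ⟨cA, h1, h2⟩ := hA; obtain ⟨cB, h3, h4⟩ := hB
  exact ⟨.pi j cA cB, pars_pi_cong h1 h3, pars_pi_cong h2 h4⟩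

theorem conv_app_cong {b b' a a' : Tm} (hb : Conv b b') (ha : Conv a a') :
    Conv (.app b a) (.app b' a') := by
  obtain ⟨cb, h1, h2⟩ := hb; obtain ⟨ca, h3, h4⟩ := ha
  exact ⟨.app cb ca, pars_app_cong h1 h3, pars_app_cong h2 h4⟩

theorem conv_lam_cong {b b' : Tm} (hb : Conv b b') : Conv (.lam b) (.lam b') := by
  obtain ⟨cb, h1, h2⟩ := hb; exact ⟨.lam cb, pars_lam_cong h1, pars_lam_cong h2⟩

theorem conv_absurd_cong {b b' : Tm} (hb : Conv b b') : Conv (.absurd b) (.absurd b') := by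
  obtain ⟨cb, h1, h2⟩ := hb; exact ⟨.absurd cb, pars_absurd_cong h1, pars_absurd_cong h2⟩

theorem conv_subst_right {B B' : Tm} (y : Tm) (h : Conv B B') :
    Conv (Tm.subst 0 y B) (Tm.subst 0 y B') := by
  obtain ⟨c, h1, h2⟩ := h
  exact ⟨Tm.subst 0 y c, pars_subst_right y h1, pars_subst_right y h2⟩

theorem deq_conv {a b : Tm} (h : DEq a b) : Conv a b := by
  induction h with
  | refl a => exact conv_refl a
  | sym _ ih => exact conv_sym ih
  | trans _ _ ih1 ih2 => exact conv_trans ih1 ih2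
  | beta b a => exact conv_of_par (.beta (parRfl b) (parRfl a))
  | pi _ _ ihA ihB => exact conv_pi_cong ihA ihB
  | lam _ ih => exact conv_lam_cong ih
  | app _ _ ihb iha => exact conv_app_cong ihb iha
  | absurd _ ih => exact conv_absurd_cong ih
/-! ### The logical relation: basic properties -/

theorem el_iff {k : ℕ} {A a : Tm} : el k A a ↔ ∃ h : U (lowEl k) k A, elU h a := by
  rw [el]; exact Iff.rfl

theorem el_bwd {k : ℕ} {A B a : Tm} (p : Par A B) (h : el k B a) : el k A a := by
  obtain ⟨u, m⟩ := el_iff.mp h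
  exact el_iff.mpr ⟨.red p u, m⟩

theorem el_bwd_pars {k : ℕ} {A B a : Tm} (p : Pars A B) (h : el k B a) : el k A a := by
  induction p with
  | refl => exact h
  | tail _ hstep ih => exact ih (el_bwd hstep h)

theorem lowEl_bwd {k j : ℕ} {B B' b : Tm} (p : Par B B') (h : lowEl k j B' b) :
    lowEl k j B b := by
  unfold lowEl at *
  split at h
  · rw [dif_pos ‹j < k›]; exact el_bwd p h
  · exact h.elim

/-- Change the lower-levels parameter of `U` (agreement below `k` suffices). -/
theorem U_param {e1 e2 : ℕ → Tm → Tm → Prop} : ∀ {k A}, U e1 k A →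
    (∀ j B b, j < k → (e1 j B b ↔ e2 j B b)) → Nonempty (U e2 k A) := by
  intro k A h
  induction h with
  | star => exact fun _ => ⟨.star⟩
  | bot => exact fun _ => ⟨.bot⟩
  | @pi k j A B hj hA hB ihA ihB =>
      intro he
      obtain ⟨hA'⟩ := ihA (fun j' B' b' hj' => he j' B' b' (hj'.trans hj))
      exact ⟨.pi hj hA' (fun y hy =>
        Classical.choice (ihB y ((he j A y hj).mpr hy) he))⟩
  | red p _ ih => exact fun he => ⟨.red p (Classical.choice (ih he))⟩

/-- Lift the level of a `U` derivation. -/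
theorem U_lift {e : ℕ → Tm → Tm → Prop} : ∀ {j A}, U e j A → ∀ {k}, j ≤ k →
    Nonempty (U e k A) := by
  intro j A h
  induction h with
  | star => exact fun _ => ⟨.star⟩
  | bot => exact fun _ => ⟨.bot⟩
  | @pi m j' A B hj hA hB ihA ihB =>
      intro k hk
      exact ⟨.pi (hj.trans_le hk) hA (fun y hy => Classical.choice (ihB y hy hk))⟩
  | red p _ ih => exact fun hk => ⟨.red p (Classical.choice (ih hk))⟩

theorem lowEl_agree {j k : ℕ} (hjk : j ≤ k) :
    ∀ j' B b, j' < j → (lowEl j j' B b ↔ lowEl k j' B b) := by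
  intro j' B b hj'
  unfold lowEl
  rw [dif_pos hj', dif_pos (hj'.trans_le hjk)]

/-- Cumulativity for `U`. -/
theorem U_cum {j k : ℕ} {A : Tm} (hjk : j ≤ k) (h : U (lowEl j) j A) :
    Nonempty (U (lowEl k) k A) := by
  obtain ⟨h'⟩ := U_param h (lowEl_agree hjk)
  exact U_lift h' hjk

/-- Forward preservation of `U` along parallel reduction. -/
theorem U_fwd {e : ℕ → Tm → Tm → Prop}
    (he : ∀ j B B' b, Par B B' → e j B' b → e j B b) :
    ∀ {k A}, U e k A → ∀ {A'}, Par A A' → Nonempty (U e k A') := by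
  intro k A h
  induction h with
  | star => intro A' p; cases p; exact ⟨.star⟩
  | bot => intro A' p; cases p; exact ⟨.bot⟩
  | @pi k j A B hj hA hB ihA ihB =>
      intro A' p
      cases p with
      | pi pA pB =>
          refine ⟨.pi hj (Classical.choice (ihA pA)) (fun y hy => ?_)⟩
          exact Classical.choice (ihB y (he _ _ _ _ pA hy) (Par.subst pB 0 (parRfl y)))
  | @red k A B p hB ih =>
      intro A' p'
      obtain ⟨d, pd1, pd2⟩ := par_diamond p p'
      obtain ⟨u⟩ := ih pd1
      exact ⟨.red pd2 u⟩

theorem U_fwd_pars {e : ℕ → Tm → Tm → Prop}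
    (he : ∀ j B B' b, Par B B' → e j B' b → e j B b)
    {k : ℕ} {A A' : Tm} (h : U e k A) (p : Pars A A') : Nonempty (U e k A') := by
  induction p with
  | refl => exact ⟨h⟩
  | tail _ hstep ih => exact U_fwd he (Classical.choice ih) hstep

theorem U_red_pars {e : ℕ → Tm → Tm → Prop} {k : ℕ} {A A' : Tm}
    (h : U e k A') (p : Pars A A') : Nonempty (U e k A) := by
  induction p using Relation.ReflTransGen.head_induction_on with
  | refl => exact ⟨h⟩
  | head hstep _ ih => exact ⟨.red hstep (Classical.choice ih)⟩

theorem U_conv {e : ℕ → Tm → Tm → Prop}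
    (he : ∀ j B B' b, Par B B' → e j B' b → e j B b)
    {k : ℕ} {A A' : Tm} (h : U e k A) (hc : Conv A A') : Nonempty (U e k A') := by
  obtain ⟨c, h1, h2⟩ := hc
  obtain ⟨u⟩ := U_fwd_pars he h h1
  exact U_red_pars u h2

/-- Membership is preserved backwards along reduction of the member. -/
theorem elU_bwd {e : ℕ → Tm → Tm → Prop} : ∀ {k A} (h : U e k A) {a a'},
    Par a a' → elU h a' → elU h a := by
  intro k A h
  induction h with
  | star => intro a a' p m; exact ⟨.red p (Classical.choice m)⟩
  | bot => intro a a' p m; exact m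
  | pi hj hA hB ihA ihB =>
      intro a a' p m y hy
      exact ihB y hy (.app p (parRfl y)) (m y hy)
  | red p h ih => exact ih


/-- Auxiliary: transporting membership-in-`⋆` to any derivation of a type
convertible to `⋆`. -/
theorem star_target {e : ℕ → Tm → Tm → Prop} : ∀ {k' A'} (h' : U e k' A'),
    Conv .star A' → ∀ a, Nonempty (U e k' a) → elU h' a := by
  intro k' A' h'
  induction h' with
  | star => exact fun _ a N => N
  | bot => exact fun hc _ _ => absurd hc conv_star_bot
  | pi hj hA hB ihA ihB => exact fun hc _ _ => absurd hc conv_star_pi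
  | red p hU ih => exact fun hc a N => ih (conv_par_right p hc) a N

theorem mega' : ∀ K j A (h : U (lowEl j) j A), j ≤ K → ∀ A' a, Conv A A' →
    ∀ (h' : U (lowEl K) K A'), elU h a → elU h' a := by
  intro K
  induction K using Nat.strong_induction_on with
  | _ K IH =>
  suffices haux : ∀ j, ∀ {jm A} (h : U (lowEl j) jm A), jm = j → j ≤ K → ∀ A' a, Conv A A' →
      ∀ (h' : U (lowEl K) K A'), elU h a → elU h' a by
    exact fun j A h => haux j h rfl
  intro j jm A h
  induction h with
  | star =>
      rintro rfl hjK A' a hconv h' m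
      exact star_target h' hconv a (U_cum hjK (Classical.choice m))
  | bot => exact fun _ _ _ a _ _ m => m.elim
  | @red jm A B p hB ihB =>
      rintro rfl hjK A' a hconv h' m
      exact ihB rfl hjK A' a (conv_par_left p hconv) h' m
  | @pi jm j₁ A₀ B₀ hj₁ hA₀ hB₀ ihA₀ ihB₀ =>
      rintro rfl hjK A' a hconv h' m
      -- inner induction: peel reductions off `h'`
      suffices inner : ∀ {k' A'} (h' : U (lowEl K) k' A'), k' = K →
          Conv (.pi j₁ A₀ B₀) A' → elU h' a by
        exact inner h' rfl hconv
      intro k' A' h'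
      induction h' with
      | star => rintro rfl hc; exact absurd (conv_sym hc) conv_star_pi
      | bot => rintro rfl hc; exact absurd (conv_sym hc) conv_bot_pi
      | @red k' A' B' p hU ih => rintro rfl hc; exact ih rfl (conv_par_right p hc)
      | @pi k' j₂ A₂ B₂ hj₂ hA₂ hB₂ ihA₂ ihB₂ =>
          rintro rfl hc
          obtain ⟨hj, hcA, hcB⟩ := conv_pi_inv hc
          subst hj
          intro y hy₂
          have hy₂' : el j₁ A₂ y := by
            have h2 := hy₂; unfold lowEl at h2; rwa [dif_pos hj₂] at h2
          have hy₀' : el j₁ A₀ y := by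
            obtain ⟨u₂, m₂⟩ := el_iff.mp hy₂'
            obtain ⟨u₀⟩ := U_conv (e := lowEl j₁) (fun _ _ _ _ p hh => lowEl_bwd p hh) u₂ (conv_sym hcA)
            exact el_iff.mpr ⟨u₀, IH j₁ hj₂ j₁ A₂ u₂ le_rfl A₀ y (conv_sym hcA) u₀ m₂⟩
          have hy₀ : lowEl jm j₁ A₀ y := by
            unfold lowEl; rwa [dif_pos hj₁]
          exact ihB₀ y hy₀ rfl hjK _ _ (conv_subst_right y hcB) (hB₂ y hy₂) (m y hy₀)

/-! ### Derived properties of `el` -/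

theorem el_conv {k : ℕ} {A B a : Tm} (hc : Conv A B) (h : el k A a) : el k B a := by
  obtain ⟨u, m⟩ := el_iff.mp h
  obtain ⟨u'⟩ := U_conv (e := lowEl k) (fun _ _ _ _ p hh => lowEl_bwd p hh) u hc
  exact el_iff.mpr ⟨u', mega' k k A u le_rfl B a hc u' m⟩

theorem el_cumul {j k : ℕ} {A a : Tm} (hjk : j ≤ k) (h : el j A a) : el k A a := by
  obtain ⟨u, m⟩ := el_iff.mp h
  obtain ⟨u'⟩ := U_cum hjk u
  exact el_iff.mpr ⟨u', mega' k j A u hjk A a (conv_refl A) u' m⟩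

theorem el_bwd_tm {k : ℕ} {A a a' : Tm} (p : Par a a') (h : el k A a') : el k A a := by
  obtain ⟨u, m⟩ := el_iff.mp h
  exact el_iff.mpr ⟨u, elU_bwd u p m⟩

theorem el_interpTy {k : ℕ} {A a : Tm} (h : el k A a) : interpTy k A := by
  obtain ⟨u, -⟩ := el_iff.mp h
  exact ⟨u⟩

theorem el_star_intro {k : ℕ} {T : Tm} (h : Nonempty (U (lowEl k) k T)) : el k .star T :=
  el_iff.mpr ⟨.star, h⟩

theorem el_star_elim {k : ℕ} {T : Tm} (h : el k .star T) : Nonempty (U (lowEl k) k T) := by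
  obtain ⟨u, m⟩ := el_iff.mp h
  exact mega' k k .star u le_rfl .star T (conv_refl _) .star m

theorem el_bot {k : ℕ} {a : Tm} (h : el k .bot a) : False := by
  obtain ⟨u, m⟩ := el_iff.mp h
  exact mega' k k .bot u le_rfl .bot a (conv_refl _) .bot m

/-- Application rule of the logical relation. -/
theorem el_pi_elim {k j : ℕ} {A B f y : Tm} (hf : el k (.pi j A B) f) (hy : el j A y) :
    el k (Tm.subst 0 y B) (.app f y) := by
  obtain ⟨u, m⟩ := el_iff.mp hf
  clear hf
  suffices haux : ∀ {k' T} (u : U (lowEl k) k' T), k' = k → ∀ {j A B}, T = .pi j A B →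
      ∀ f, elU u f → ∀ y, el j A y → el k (Tm.subst 0 y B) (.app f y) by
    exact haux u rfl rfl f m y hy
  clear m u hy j A B f y
  intro k' T u
  induction u with
  | star => rintro rfl j A B hT; exact absurd hT (by simp)
  | bot => rintro rfl j A B hT; exact absurd hT (by simp)
  | @pi k' j₀ A₀ B₀ hj hA hB ihA ihB =>
      rintro rfl j A B hT f m y hy
      injection hT with e1 e2 e3
      subst e1; subst e2; subst e3
      have hy' : lowEl k' j₀ A₀ y := by unfold lowEl; rwa [dif_pos hj]
      exact el_iff.mpr ⟨hB y hy', m y hy'⟩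
  | @red k' T C p hC ih =>
      rintro rfl j A B rfl f m y hy
      cases p with
      | pi pA pB =>
          have hy₂ : el j _ y := el_conv (conv_of_par pA) hy
          have h2 := ih rfl rfl f m y hy₂
          exact el_bwd (Par.subst pB 0 (parRfl y)) h2

/-! ### Simultaneous substitutions -/

/-- Extend a substitution with a term for index 0. -/
def scons (y : Tm) (σ : ℕ → Tm) : ℕ → Tm
  | 0 => y
  | n + 1 => σ n

/-- Iterated lifting. -/
def upn : ℕ → (ℕ → Tm) → (ℕ → Tm)
  | 0, σ => σ
  | n + 1, σ => up (upn n σ)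

theorem tl_scons (y : Tm) (σ : ℕ → Tm) : tl (scons y σ) = σ := funext fun n => rfl

theorem applySubst_congr {σ τ : ℕ → Tm} (h : ∀ n, σ n = τ n) (t : Tm) :
    applySubst σ t = applySubst τ t := by
  have : σ = τ := funext h
  rw [this]

theorem upn_apply : ∀ (n : ℕ) (σ : ℕ → Tm) (x : ℕ),
    upn n σ x = if x < n then .var x else Tm.shift n 0 (σ (x - n)) := by
  intro n
  induction n with
  | zero => intro σ x; simp [upn, Tm.shift_zero]
  | succ n ih =>
      intro σ x
      cases x with
      | zero => simp [upn, up]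
      | succ m =>
          have : upn (n + 1) σ (m + 1) = Tm.shift 1 0 (upn n σ m) := rfl
          rw [this, ih]
          split
          · rw [if_pos (by omega)]; simp [Tm.shift]
          · rw [if_neg (by omega), Tm.shift_shift (σ (m - n)) (Nat.zero_le 0) (by omega : 0 ≤ 0 + n)]
            congr 2
            omega

/-- `applySubst` under a lifted substitution commutes with shifting. -/
theorem applySubst_shift_upn : ∀ (t : Tm) (n c : ℕ) (σ : ℕ → Tm),
    applySubst (upn (n + c) σ) (Tm.shift n c t) = Tm.shift n c (applySubst (upn c σ) t)
  | .star, _, _, _ => rfl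
  | .bot, _, _, _ => rfl
  | .var x, n, c, σ => by
      simp only [Tm.shift]
      split
      · show upn (n + c) σ x = Tm.shift n c (upn c σ x)
        rw [upn_apply, if_pos (by omega), upn_apply, if_pos ‹x < c›]
        simp only [Tm.shift]
        rw [if_pos ‹x < c›]
      · show upn (n + c) σ (x + n) = Tm.shift n c (upn c σ x)
        rw [upn_apply, if_neg (by omega), upn_apply, if_neg ‹¬ x < c›,
          Tm.shift_shift (σ (x - c)) (Nat.zero_le c) (by omega : c ≤ 0 + c),
          show x + n - (n + c) = x - c by omega, show n + c = c + n by omega]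
  | .pi j A B, n, c, σ => by
      simp only [Tm.shift, applySubst]
      rw [applySubst_shift_upn A n c σ]
      exact congrArg _ (applySubst_shift_upn B n (c + 1) σ)
  | .lam b, n, c, σ => by
      simp only [Tm.shift, applySubst]
      exact congrArg _ (applySubst_shift_upn b n (c + 1) σ)
  | .app b a, n, c, σ => by
      simp only [Tm.shift, applySubst, applySubst_shift_upn b n c σ, applySubst_shift_upn a n c σ]
  | .absurd b, n, c, σ => by
      simp only [Tm.shift, applySubst, applySubst_shift_upn b n c σ]

/-- Single substitution after a lifted simultaneous substitution is a
simultaneous substitution with an extended head. -/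
theorem subst_applySubst_up : ∀ (t : Tm) (n : ℕ) (σ : ℕ → Tm) (y : Tm),
    Tm.subst n y (applySubst (upn n (up σ)) t) = applySubst (upn n (scons y σ)) t
  | .star, _, _, _ => rfl
  | .bot, _, _, _ => rfl
  | .var x, n, σ, y => by
      show Tm.subst n y (upn n (up σ) x) = upn n (scons y σ) x
      rcases Nat.lt_trichotomy x n with h | rfl | h
      · rw [upn_apply, if_pos h, upn_apply, if_pos h]
        simp only [Tm.subst]
        rw [if_pos h]
      · rw [upn_apply, if_neg (by omega), upn_apply, if_neg (by omega), Nat.sub_self]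
        show Tm.subst x y (Tm.shift x 0 (.var 0)) = Tm.shift x 0 y
        have e1 : Tm.shift x 0 (.var 0) = .var x := by
          simp only [Tm.shift]
          rw [if_neg (by omega), Nat.zero_add]
        rw [e1]
        simp [Tm.subst]
      · rw [upn_apply, if_neg (by omega), upn_apply, if_neg (by omega)]
        have e : x - n = (x - n - 1) + 1 := by omega
        rw [e]
        show Tm.subst n y (Tm.shift n 0 (Tm.shift 1 0 (σ (x - n - 1)))) = _
        rw [Tm.shift_shift (σ (x - n - 1)) (Nat.zero_le 0) (by omega : 0 ≤ 0 + 1),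
          Tm.subst_shift_cancel (σ (x - n - 1)) y (Nat.zero_le n) (by omega : n < 0 + (1 + n)),
          show 1 + n - 1 = n by omega]
        rfl
  | .pi j A B, n, σ, y => by
      simp only [applySubst, Tm.subst]
      rw [subst_applySubst_up A n σ y]
      exact congrArg _ (subst_applySubst_up B (n + 1) σ y)
  | .lam b, n, σ, y => by
      simp only [applySubst, Tm.subst]
      exact congrArg _ (subst_applySubst_up b (n + 1) σ y)
  | .app b a, n, σ, y => by
      simp only [applySubst, Tm.subst,
        subst_applySubst_up b n σ y, subst_applySubst_up a n σ y]
  | .absurd b, n, σ, y => by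
      simp only [applySubst, Tm.subst, subst_applySubst_up b n σ y]

theorem subst_applySubst_up0 (t : Tm) (σ : ℕ → Tm) (y : Tm) :
    Tm.subst 0 y (applySubst (up σ) t) = applySubst (scons y σ) t :=
  subst_applySubst_up t 0 σ y

/-- Simultaneous substitution of a single substitution. -/
theorem applySubst_subst : ∀ (t : Tm) (n : ℕ) (σ : ℕ → Tm) (a : Tm),
    applySubst (upn n σ) (Tm.subst n a t)
      = applySubst (upn n (scons (applySubst σ a) σ)) t
  | .star, _, _, _ => rfl
  | .bot, _, _, _ => rfl
  | .var x, n, σ, a => by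
      simp only [Tm.subst]
      rcases Nat.lt_trichotomy x n with h | rfl | h
      · rw [if_pos h]
        show upn n σ x = upn n (scons (applySubst σ a) σ) x
        rw [upn_apply, if_pos h, upn_apply, if_pos h]
      · rw [if_neg (by omega), if_pos rfl]
        show applySubst (upn x σ) (Tm.shift x 0 a) = upn x (scons (applySubst σ a) σ) x
        rw [upn_apply, if_neg (by omega), Nat.sub_self]
        exact applySubst_shift_upn a x 0 σ
      · rw [if_neg (by omega), if_neg (by omega)]
        show upn n σ (x - 1) = upn n (scons (applySubst σ a) σ) x
        rw [upn_apply, if_neg (by omega), upn_apply, if_neg (by omega),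
          show x - n = (x - n - 1) + 1 by omega, show x - 1 - n = x - n - 1 by omega]
        rfl
  | .pi j A B, n, σ, a => by
      simp only [applySubst, Tm.subst]
      rw [applySubst_subst A n σ a]
      exact congrArg _ (applySubst_subst B (n + 1) σ a)
  | .lam b, n, σ, a => by
      simp only [applySubst, Tm.subst]
      exact congrArg _ (applySubst_subst b (n + 1) σ a)
  | .app b a', n, σ, a => by
      simp only [applySubst, Tm.subst, applySubst_subst b n σ a, applySubst_subst a' n σ a]
  | .absurd b, n, σ, a => by
      simp only [applySubst, Tm.subst, applySubst_subst b n σ a]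

theorem applySubst_subst0 (t : Tm) (σ : ℕ → Tm) (a : Tm) :
    applySubst σ (Tm.subst 0 a t) = applySubst (scons (applySubst σ a) σ) t :=
  applySubst_subst t 0 σ a

/-- Substituting a shifted term drops part of the substitution. -/
theorem applySubst_shift_drop : ∀ (t : Tm) (c n : ℕ) (σ : ℕ → Tm),
    applySubst σ (Tm.shift n c t)
      = applySubst (fun i => if i < c then σ i else σ (i + n)) t
  | .star, _, _, _ => rfl
  | .bot, _, _, _ => rfl
  | .var x, c, n, σ => by
      simp only [Tm.shift]
      split
      · show σ x = _
        simp only [applySubst]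
        rw [if_pos ‹x < c›]
      · show σ (x + n) = _
        simp only [applySubst]
        rw [if_neg ‹¬ x < c›]
  | .pi j A B, c, n, σ => by
      simp only [Tm.shift, applySubst]
      rw [applySubst_shift_drop A c n σ, applySubst_shift_drop B (c + 1) n (up σ)]
      refine congrArg _ (applySubst_congr (fun i => ?_) B)
      cases i with
      | zero => simp [up]
      | succ m =>
          show (if m + 1 < c + 1 then up σ (m + 1) else up σ (m + 1 + n))
            = Tm.shift 1 0 (if m < c then σ m else σ (m + n))
          by_cases h : m < c
          · rw [if_pos (by omega), if_pos h]; rfl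
          · rw [if_neg (by omega), if_neg h, show m + 1 + n = m + n + 1 by omega]; rfl
  | .lam b, c, n, σ => by
      simp only [Tm.shift, applySubst]
      rw [applySubst_shift_drop b (c + 1) n (up σ)]
      refine congrArg _ (applySubst_congr (fun i => ?_) b)
      cases i with
      | zero => simp [up]
      | succ m =>
          show (if m + 1 < c + 1 then up σ (m + 1) else up σ (m + 1 + n))
            = Tm.shift 1 0 (if m < c then σ m else σ (m + n))
          by_cases h : m < c
          · rw [if_pos (by omega), if_pos h]; rfl
          · rw [if_neg (by omega), if_neg h, show m + 1 + n = m + n + 1 by omega]; rfl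
  | .app b a, c, n, σ => by
      simp only [Tm.shift, applySubst, applySubst_shift_drop b c n σ,
        applySubst_shift_drop a c n σ]
  | .absurd b, c, n, σ => by
      simp only [Tm.shift, applySubst, applySubst_shift_drop b c n σ]

theorem applySubst_shift_drop0 (t : Tm) (n : ℕ) (σ : ℕ → Tm) :
    applySubst σ (Tm.shift n 0 t) = applySubst (fun i => σ (i + n)) t := by
  rw [applySubst_shift_drop t 0 n σ]
  exact applySubst_congr (fun i => by simp) t

/-- Definitional equality is preserved by simultaneous substitution. -/
theorem deq_applySubst {a b : Tm} (h : DEq a b) : ∀ σ, DEq (applySubst σ a) (applySubst σ b) := by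
  induction h with
  | refl a => exact fun σ => .refl _
  | sym _ ih => exact fun σ => .sym (ih σ)
  | trans _ _ ih1 ih2 => exact fun σ => .trans (ih1 σ) (ih2 σ)
  | pi _ _ ihA ihB => exact fun σ => .pi (ihA σ) (ihB (up σ))
  | lam _ ih => exact fun σ => .lam (ih (up σ))
  | app _ _ ihb iha => exact fun σ => .app (ihb σ) (iha σ)
  | absurd _ ih => exact fun σ => .absurd (ih σ)
  | beta b a =>
      intro σ
      have h1 : DEq (applySubst σ (.app (.lam b) a))
          (Tm.subst 0 (applySubst σ a) (applySubst (up σ) b)) := .beta _ _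
      rw [subst_applySubst_up0, ← applySubst_subst0] at h1
      exact h1

/-- Semantic soundness of variable lookup. -/
theorem var_sem : ∀ (Γ : Ctx) (σ : ℕ → Tm) (x j : ℕ) (A : Tm), substInterp Γ σ →
    Γ[x]? = some (j, A) → el j (applySubst (fun i => σ (i + (x + 1))) A) (σ x) := by
  intro Γ
  induction Γ with
  | nil => intro σ x j A _ hget; simp at hget
  | cons p Γ ih =>
      obtain ⟨k₀, A₀⟩ := p
      intro σ x j A hσ hget
      cases x with
      | zero =>
          simp only [List.getElem?_cons_zero, Option.some.injEq, Prod.mk.injEq] at hget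
          obtain ⟨rfl, rfl⟩ := hget
          exact hσ.2
      | succ x' =>
          rw [List.getElem?_cons_succ] at hget
          exact ih (tl σ) x' j A hσ.1 hget

/-- The main semantic soundness induction. -/
theorem sound {Γ : Ctx} {a : Tm} {k : ℕ} {A : Tm} (h : Typing Γ a k A) :
    ∀ σ, substInterp Γ σ → el k (applySubst σ A) (applySubst σ a) := by
  refine Typing.rec (motive_1 := fun _ _ => True)
    (motive_2 := fun Γ a k A _ =>
      ∀ σ, substInterp Γ σ → el k (applySubst σ A) (applySubst σ a))
    trivial (fun _ _ _ _ => trivial)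
    ?star ?var ?pi ?lam ?app ?bot ?absurd ?conv h
  case star =>
    intro Γ k _ _ σ hσ
    exact el_star_intro ⟨.star⟩
  case bot =>
    intro Γ k _ _ σ hσ
    exact el_star_intro ⟨.bot⟩
  case var =>
    intro Γ x j k A _ hget hjk _ σ hσ
    show el k (applySubst σ (Tm.shift (x + 1) 0 A)) (σ x)
    rw [applySubst_shift_drop0]
    exact el_cumul hjk (var_sem Γ σ x j A hσ hget)
  case pi =>
    intro Γ j k A B hjk hA hB ihA ihB σ hσ
    show el k .star (.pi j (applySubst σ A) (applySubst (up σ) B))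
    refine el_star_intro ⟨.pi hjk ?_ ?_⟩
    · exact Classical.choice (U_param (Classical.choice (el_star_elim (ihA σ hσ)))
        (lowEl_agree (le_of_lt hjk)))
    · intro y hy
      have hy' : el j (applySubst σ A) y := by
        have h2 := hy; unfold lowEl at h2; rwa [dif_pos hjk] at h2
      have hσ' : substInterp ((j, A) :: Γ) (scons y σ) := by
        show substInterp Γ (tl (scons y σ)) ∧ el j (applySubst (tl (scons y σ)) A) (scons y σ 0)
        rw [tl_scons]
        exact ⟨hσ, hy'⟩
      have hB' := ihB (scons y σ) hσ'
      rw [← subst_applySubst_up0 B σ y] at hB'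
      exact Classical.choice (el_star_elim hB')
  case lam =>
    intro Γ j k A B b hjk hA hb ihA ihb σ hσ
    show el k (.pi j (applySubst σ A) (applySubst (up σ) B)) (.lam (applySubst (up σ) b))
    have dA : U (lowEl k) j (applySubst σ A) :=
      Classical.choice (U_param (Classical.choice (el_star_elim (ihA σ hσ)))
        (lowEl_agree (le_of_lt hjk)))
    have key : ∀ y, lowEl k j (applySubst σ A) y →
        el k (Tm.subst 0 y (applySubst (up σ) B)) (Tm.subst 0 y (applySubst (up σ) b)) := by
      intro y hy
      have hy' : el j (applySubst σ A) y := by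
        have h2 := hy; unfold lowEl at h2; rwa [dif_pos hjk] at h2
      have hσ' : substInterp ((j, A) :: Γ) (scons y σ) := by
        show substInterp Γ (tl (scons y σ)) ∧ el j (applySubst (tl (scons y σ)) A) (scons y σ 0)
        rw [tl_scons]
        exact ⟨hσ, hy'⟩
      have h2 := ihb (scons y σ) hσ'
      rwa [← subst_applySubst_up0 B σ y, ← subst_applySubst_up0 b σ y] at h2
    refine el_iff.mpr ⟨.pi hjk dA (fun y hy => (el_iff.mp (key y hy)).choose), ?_⟩
    intro y hy
    exact elU_bwd _ (Par.beta (parRfl _) (parRfl y)) (el_iff.mp (key y hy)).choose_spec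
  case app =>
    intro Γ j k A B b a hb ha ihb iha σ hσ
    show el k (applySubst σ (Tm.subst 0 a B)) (.app (applySubst σ b) (applySubst σ a))
    have h3 := el_pi_elim (ihb σ hσ) (iha σ hσ)
    rwa [applySubst_subst0 B σ a, ← subst_applySubst_up0 B σ (applySubst σ a)]
  case absurd =>
    intro Γ k b A hb hA ihb ihA σ hσ
    exact ((el_bot (ihb σ hσ)).elim : _)
  case conv =>
    intro Γ k a A B ha hAB hB iha ihB σ hσ
    exact el_conv (deq_conv (deq_applySubst hAB σ)) (iha σ hσ)

/-- **Soundness (the fundamental theorem) for subStraTT**: if `⟦Γ⟧`,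
`σ ∈ ⟦Γ⟧`, and `Γ ⊢ a :^k A`, then `⟦A{σ}⟧ₖ` and `a{σ} ∈ ⟦A{σ}⟧ₖ`. -/
theorem substratt_soundness {Γ : Ctx} {σ : ℕ → Tm} {a A : Tm} {k : ℕ}
    (hΓ : ctxInterp Γ) (hσ : substInterp Γ σ) (h : Typing Γ a k A) :
    interpTy k (applySubst σ A) ∧ el k (applySubst σ A) (applySubst σ a) := by
  have h2 := sound h σ hσ
  exact ⟨el_interpTy h2, h2⟩
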